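/- Let m : [0,∞) → ℝ be a continuous, weakly increasing function with m(y)/log(y) → 1 as y → ∞. Let (Y(1),Y(0)) have joint distribution P on [0,∞)² with neither marginal degenerate at zero, suppose P(Y(1)=0) ≠ P(Y(0)=0), and suppose E[|log Y(d)| | Y(d)>0] < ∞ for d=0,1. Define θ(a) = E_P[m(aY(1)) − m(aY(0))] for a ≥ 0. Then θ is continuous on [0,∞), θ(a) → 0 as a → 0, |θ(a)| → ∞ as a → ∞, and consequently for every θ* ∈ (0,∞) there exists a > 0 with |θ(a)| = θ*. -/

import Mathlib

open MeasureTheory Filter Set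

namespace ChenRothAux

/-- Growth bound for a monotone, log-like function: `|M y| ≤ C + 2|log y|` for `y ≥ 0`. -/
lemma growth_bound {M : ℝ → ℝ} (hM : Monotone M)
    (hlim : Tendsto (fun y => M y / Real.log y) atTop (nhds 1)) :
    ∃ C : ℝ, 0 ≤ C ∧ ∀ y : ℝ, 0 ≤ y → |M y| ≤ C + 2 * |Real.log y| := by
  have h1 : ∀ᶠ y in atTop, |M y / Real.log y - 1| < 1 := by
    have := Metric.tendsto_nhds.mp hlim 1 one_pos
    simpa [Real.dist_eq] using this
  obtain ⟨N, hN⟩ := eventually_atTop.mp h1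
  set N' : ℝ := max N 3 with hN'
  refine ⟨|M 0| + |M N'|, by positivity, fun y hy => ?_⟩
  rcases le_or_gt y N' with h | h
  · have h1 : M 0 ≤ M y := hM hy
    have h2 : M y ≤ M N' := hM h
    have : |M y| ≤ |M 0| + |M N'| := by
      rw [abs_le]; constructor
      · have := neg_abs_le (M 0); nlinarith [abs_nonneg (M N')]
      · have := le_abs_self (M N'); nlinarith [abs_nonneg (M 0)]
    nlinarith [abs_nonneg (Real.log y)]
  · have hy3 : (3:ℝ) ≤ y := le_trans (le_max_right _ _) h.le
    have hlog : (1:ℝ) ≤ Real.log y := by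
      rw [show (1:ℝ) = Real.log (Real.exp 1) by simp]
      exact Real.log_le_log (Real.exp_pos 1) (le_trans (by nlinarith [Real.exp_one_lt_d9]) hy3)
    have hlogpos : 0 < Real.log y := lt_of_lt_of_le one_pos hlog
    have hb := hN y (le_trans (le_max_left _ _) h.le)
    have : |M y / Real.log y| < 2 := by
      calc |M y / Real.log y| ≤ |M y / Real.log y - 1| + 1 := by
            have := abs_sub_abs_le_abs_sub (M y / Real.log y) 1; simp at this ⊢; linarith
        _ < 2 := by linarith
    rw [abs_div, abs_of_pos hlogpos] at this
    have : |M y| < 2 * Real.log y := by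
      rwa [div_lt_iff₀ hlogpos] at this
    rw [abs_of_pos hlogpos]
    nlinarith [abs_nonneg (M 0), abs_nonneg (M N')]

variable {Ω : Type*} [MeasurableSpace Ω] {μ : Measure Ω} [IsProbabilityMeasure μ]

/-- Integrability of `ω ↦ M (c * Y ω)`. -/
lemma integrable_comp {M : ℝ → ℝ} (hMc : Continuous M) {C : ℝ}
    (hC : ∀ y : ℝ, 0 ≤ y → |M y| ≤ C + 2 * |Real.log y|)
    {Y : Ω → ℝ} (hYm : Measurable Y) (hY : ∀ ω, 0 ≤ Y ω)
    (hint : IntegrableOn (fun ω => Real.log (Y ω)) {ω | 0 < Y ω} μ)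
    {c : ℝ} (hc : 0 ≤ c) :
    Integrable (fun ω => M (c * Y ω)) μ := by
  have hs : MeasurableSet {ω | 0 < Y ω} := measurableSet_lt measurable_const hYm
  have hind : Integrable ({ω | 0 < Y ω}.indicator fun ω => |Real.log (Y ω)|) μ :=
    (integrable_indicator_iff hs).mpr hint.abs
  have hg : Integrable (fun ω => (C + 2 * |Real.log c|) +
      2 * ({ω | 0 < Y ω}.indicator fun ω => |Real.log (Y ω)|) ω) μ :=
    (integrable_const _).add (hind.const_mul 2)
  refine hg.mono' ((hMc.measurable.comp (measurable_const.mul hYm)).aestronglyMeasurable) ?_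
  refine ae_of_all _ fun ω => ?_
  have hind_nonneg : 0 ≤ ({ω | 0 < Y ω}.indicator fun ω => |Real.log (Y ω)|) ω :=
    Set.indicator_nonneg (fun ω _ => abs_nonneg _) ω
  rcases eq_or_lt_of_le (mul_nonneg hc (hY ω)) with h | h
  · rw [Real.norm_eq_abs, ← h]
    have := hC 0 le_rfl
    simp only [Real.log_zero, abs_zero] at this
    have habs : 0 ≤ |Real.log c| := abs_nonneg _
    linarith
  · have hc' : 0 < c := by
      rcases hc.lt_or_eq with h' | h'; · exact h'
      · exfalso; rw [← h'] at h; simp at h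
    have hYω : 0 < Y ω := by
      by_contra hcon
      push_neg at hcon
      have : Y ω = 0 := le_antisymm hcon (hY ω)
      rw [this] at h; simp at h
    rw [Real.norm_eq_abs]
    have h1 := hC (c * Y ω) (mul_nonneg hc (hY ω))
    rw [Real.log_mul (ne_of_gt hc') (ne_of_gt hYω)] at h1
    have h2 : |Real.log c + Real.log (Y ω)| ≤ |Real.log c| + |Real.log (Y ω)| := abs_add_le _ _
    rw [Set.indicator_of_mem (show ω ∈ {ω' | 0 < Y ω'} from hYω)]
    linarith

/-- For fixed `t > 0`, `M (a t) / log a → 1` as `a → ∞`. -/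
lemma tendsto_M_div_log {M : ℝ → ℝ}
    (hlim : Tendsto (fun y => M y / Real.log y) atTop (nhds 1))
    {t : ℝ} (ht : 0 < t) :
    Tendsto (fun a => M (a * t) / Real.log a) atTop (nhds 1) := by
  have hmul : Tendsto (fun a : ℝ => a * t) atTop atTop := tendsto_id.atTop_mul_const ht
  have g1 : Tendsto (fun a => M (a * t) / Real.log (a * t)) atTop (nhds 1) := hlim.comp hmul
  have hloginv : Tendsto (fun a : ℝ => (Real.log a)⁻¹) atTop (nhds 0) :=
    Real.tendsto_log_atTop.inv_tendsto_atTop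
  have g2 : Tendsto (fun a => Real.log (a * t) / Real.log a) atTop (nhds 1) := by
    have : Tendsto (fun a : ℝ => 1 + Real.log t * (Real.log a)⁻¹) atTop (nhds (1 + Real.log t * 0)) :=
      tendsto_const_nhds.add (hloginv.const_mul _)
    rw [mul_zero, add_zero] at this
    refine this.congr' ?_
    filter_upwards [eventually_gt_atTop 1] with a ha
    have hla : Real.log a ≠ 0 := ne_of_gt (Real.log_pos ha)
    rw [Real.log_mul (by linarith) (ne_of_gt ht)]
    field_simp
  have := g1.mul g2
  rw [one_mul] at this
  refine this.congr' ?_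
  have h2t : Tendsto (fun a : ℝ => a * t) atTop atTop := hmul
  filter_upwards [eventually_gt_atTop 1, h2t.eventually (eventually_gt_atTop 1)] with a ha hat
  have h1 : Real.log a ≠ 0 := ne_of_gt (Real.log_pos ha)
  have h2 : Real.log (a * t) ≠ 0 := ne_of_gt (Real.log_pos hat)
  field_simp

/-- Key asymptotic: `(∫ M(aY)) / log a → μ{Y > 0}`. -/
lemma tendsto_integral_div_log {M : ℝ → ℝ} (hMc : Continuous M) {C : ℝ} (hC0 : 0 ≤ C)
    (hC : ∀ y : ℝ, 0 ≤ y → |M y| ≤ C + 2 * |Real.log y|)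
    (hlim : Tendsto (fun y => M y / Real.log y) atTop (nhds 1))
    {Y : Ω → ℝ} (hYm : Measurable Y) (hY : ∀ ω, 0 ≤ Y ω)
    (hint : IntegrableOn (fun ω => Real.log (Y ω)) {ω | 0 < Y ω} μ) :
    Tendsto (fun a => (∫ ω, M (a * Y ω) ∂μ) / Real.log a) atTop
      (nhds (μ {ω | 0 < Y ω}).toReal) := by
  have hs : MeasurableSet {ω | 0 < Y ω} := measurableSet_lt measurable_const hYm
  have key : Tendsto (fun a => ∫ ω, M (a * Y ω) / Real.log a ∂μ) atTop
      (nhds (∫ ω, ({ω | 0 < Y ω}.indicator (fun _ => (1:ℝ))) ω ∂μ)) := by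
    refine tendsto_integral_filter_of_dominated_convergence
      (fun ω => C + 2 + 2 * ({ω | 0 < Y ω}.indicator fun ω => |Real.log (Y ω)|) ω)
      ?_ ?_ ?_ ?_
    · filter_upwards [eventually_ge_atTop (3:ℝ)] with a _
      exact ((hMc.measurable.comp (measurable_const.mul hYm)).div_const _).aestronglyMeasurable
    · filter_upwards [eventually_ge_atTop (3:ℝ)] with a ha
      refine ae_of_all _ fun ω => ?_
      have hlog : (1:ℝ) ≤ Real.log a := by
        rw [show (1:ℝ) = Real.log (Real.exp 1) by simp]
        exact Real.log_le_log (Real.exp_pos 1) (le_trans (by nlinarith [Real.exp_one_lt_d9]) ha)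
      have hlogpos : 0 < Real.log a := lt_of_lt_of_le one_pos hlog
      rw [Real.norm_eq_abs, abs_div, abs_of_pos hlogpos, div_le_iff₀ hlogpos]
      rcases (hY ω).lt_or_eq with hYω | hYω
      · rw [Set.indicator_of_mem (show ω ∈ {ω' | 0 < Y ω'} from hYω)]
        have h1 := hC (a * Y ω) (by positivity)
        rw [Real.log_mul (by linarith) (ne_of_gt hYω)] at h1
        have h2 : |Real.log a + Real.log (Y ω)| ≤ |Real.log a| + |Real.log (Y ω)| := abs_add_le _ _
        rw [abs_of_pos hlogpos] at h2
        nlinarith [abs_nonneg (Real.log (Y ω))]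
      · rw [← hYω, mul_zero]
        have h1 := hC 0 le_rfl
        simp only [Real.log_zero, abs_zero, mul_zero, add_zero] at h1
        have hind_nonneg : 0 ≤ ({ω | 0 < Y ω}.indicator fun ω => |Real.log (Y ω)|) ω :=
          Set.indicator_nonneg (fun ω _ => abs_nonneg _) ω
        nlinarith
    · exact (integrable_const _).add
        (((integrable_indicator_iff hs).mpr hint.abs).const_mul 2)
    · refine ae_of_all _ fun ω => ?_
      rcases (hY ω).lt_or_eq with hYω | hYω
      · rw [Set.indicator_of_mem (show ω ∈ {ω' | 0 < Y ω'} from hYω)]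
        exact tendsto_M_div_log hlim hYω
      · rw [Set.indicator_of_notMem (by simp [← hYω])]
        simp only [← hYω, mul_zero]
        have : Tendsto (fun a : ℝ => M 0 * (Real.log a)⁻¹) atTop (nhds (M 0 * 0)) :=
          Real.tendsto_log_atTop.inv_tendsto_atTop.const_mul _
        rw [mul_zero] at this
        exact this.congr fun a => by rw [div_eq_mul_inv]
  have heq : ∫ ω, ({ω | 0 < Y ω}.indicator (fun _ => (1:ℝ))) ω ∂μ = (μ {ω | 0 < Y ω}).toReal := by
    rw [integral_indicator hs]
    simp [measure_univ]
    rfl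
  rw [heq] at key
  refine key.congr fun a => ?_
  rw [integral_div]

end ChenRothAux

open ChenRothAux

/-- Chen–Roth, Proposition 1: for a log-like transformation `m`
(continuous, weakly increasing, `m(y)/log y → 1`), if the treatment affects the
extensive margin, then the rescaled ATE `θ(a) = E[m(aY(1)) - m(aY(0))]` is continuous,
tends to 0 as `a → 0`, has `|θ(a)| → ∞` as `a → ∞`, and hence attains every
magnitude `θ* ∈ (0,∞)`. -/
theorem stmt_0
    {Ω : Type*} [MeasurableSpace Ω] (μ : Measure Ω) [IsProbabilityMeasure μ]
    (Y1 Y0 : Ω → ℝ) (hY1meas : Measurable Y1) (hY0meas : Measurable Y0)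
    (hY1nonneg : ∀ ω, 0 ≤ Y1 ω) (hY0nonneg : ∀ ω, 0 ≤ Y0 ω)
    (m : ℝ → ℝ)
    (hm_cont : ContinuousOn m (Ici 0))
    (hm_mono : MonotoneOn m (Ici 0))
    (hm_loglike : Tendsto (fun y => m y / Real.log y) atTop (nhds 1))
    -- neither marginal is degenerate at zero
    (hnondeg1 : μ {ω | Y1 ω = 0} < 1)
    (hnondeg0 : μ {ω | Y0 ω = 0} < 1)
    -- treatment affects the extensive margin
    (hext : μ {ω | Y1 ω = 0} ≠ μ {ω | Y0 ω = 0})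
    -- E[|log Y(d)| ∣ Y(d) > 0] < ∞ for d = 0,1
    (hint1 : IntegrableOn (fun ω => Real.log (Y1 ω)) {ω | 0 < Y1 ω} μ)
    (hint0 : IntegrableOn (fun ω => Real.log (Y0 ω)) {ω | 0 < Y0 ω} μ)
    (θ : ℝ → ℝ)
    (hθ : ∀ a, θ a = ∫ ω, (m (a * Y1 ω) - m (a * Y0 ω)) ∂μ) :
    ContinuousOn θ (Ici 0) ∧
    Tendsto θ (nhdsWithin 0 (Ici 0)) (nhds 0) ∧
    Tendsto (fun a => |θ a|) atTop atTop ∧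
    ∀ θstar : ℝ, 0 < θstar → ∃ a : ℝ, 0 < a ∧ |θ a| = θstar := by
  -- Replace `m` by a globally defined monotone continuous `M`
  set M : ℝ → ℝ := fun y => m (max y 0) with hMdef
  have hMc : Continuous M :=
    hm_cont.comp_continuous (continuous_id.max continuous_const) (fun x => mem_Ici.mpr (le_max_right _ _))
  have hMmono : Monotone M := fun x y h =>
    hm_mono (mem_Ici.mpr (le_max_right _ _)) (mem_Ici.mpr (le_max_right _ _)) (max_le_max h le_rfl)
  have hMlim : Tendsto (fun y => M y / Real.log y) atTop (nhds 1) := by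
    refine hm_loglike.congr' ?_
    filter_upwards [eventually_ge_atTop (0:ℝ)] with y hy
    simp [hMdef, max_eq_left hy]
  obtain ⟨C, hC0, hC⟩ := growth_bound hMmono hMlim
  have hθ' : ∀ a : ℝ, 0 ≤ a → θ a = ∫ ω, (M (a * Y1 ω) - M (a * Y0 ω)) ∂μ := by
    intro a ha
    rw [hθ]
    congr 1
    funext ω
    rw [hMdef]
    simp [max_eq_left (mul_nonneg ha (hY1nonneg ω)), max_eq_left (mul_nonneg ha (hY0nonneg ω))]
  have hI1 : ∀ c : ℝ, 0 ≤ c → Integrable (fun ω => M (c * Y1 ω)) μ :=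
    fun c hc => integrable_comp hMc hC hY1meas hY1nonneg hint1 hc
  have hI0 : ∀ c : ℝ, 0 ≤ c → Integrable (fun ω => M (c * Y0 ω)) μ :=
    fun c hc => integrable_comp hMc hC hY0meas hY0nonneg hint0 hc
  -- continuity
  have hcont : ContinuousOn θ (Ici 0) := by
    intro a₀ ha₀
    have ha₀' : (0:ℝ) ≤ a₀ := ha₀
    set A : ℝ := a₀ + 1 with hA
    have hbd : ∀ (Y : Ω → ℝ), (∀ ω, 0 ≤ Y ω) → ∀ a : ℝ, 0 ≤ a → a ≤ A → ∀ ω,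
        |M (a * Y ω)| ≤ |M 0| + |M (A * Y ω)| := by
      intro Y hY a ha haA ω
      have h1 : M 0 ≤ M (a * Y ω) := hMmono (mul_nonneg ha (hY ω))
      have h2 : M (a * Y ω) ≤ M (A * Y ω) := hMmono (mul_le_mul_of_nonneg_right haA (hY ω))
      rw [abs_le]
      constructor
      · nlinarith [neg_abs_le (M 0), abs_nonneg (M (A * Y ω))]
      · nlinarith [le_abs_self (M (A * Y ω)), abs_nonneg (M 0)]
    have key : ContinuousWithinAt
        (fun a => ∫ ω, (M (a * Y1 ω) - M (a * Y0 ω)) ∂μ) (Ici 0) a₀ := by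
      refine continuousWithinAt_of_dominated
        (bound := fun ω => (|M 0| + |M (A * Y1 ω)|) + (|M 0| + |M (A * Y0 ω)|)) ?_ ?_ ?_ ?_
      · refine Eventually.of_forall fun a => ?_
        exact ((hMc.measurable.comp (measurable_const.mul hY1meas)).sub
          (hMc.measurable.comp (measurable_const.mul hY0meas))).aestronglyMeasurable
      · have hev : ∀ᶠ a in nhdsWithin a₀ (Ici 0), a ∈ Icc 0 A := by
          filter_upwards [eventually_mem_nhdsWithin,
            (eventually_lt_nhds (lt_add_one a₀)).filter_mono nhdsWithin_le_nhds] with a h1 h2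
          exact ⟨h1, h2.le⟩
        filter_upwards [hev] with a ha
        refine ae_of_all _ fun ω => ?_
        have b1 := hbd Y1 hY1nonneg a ha.1 ha.2 ω
        have b0 := hbd Y0 hY0nonneg a ha.1 ha.2 ω
        calc ‖M (a * Y1 ω) - M (a * Y0 ω)‖ ≤ |M (a * Y1 ω)| + |M (a * Y0 ω)| := abs_sub _ _
          _ ≤ _ := add_le_add b1 b0
      · exact (((integrable_const _).add ((hI1 A (by positivity)).abs)).add
          ((integrable_const _).add ((hI0 A (by positivity)).abs)))
      · refine ae_of_all _ fun ω => ?_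
        exact ((hMc.comp (continuous_id.mul continuous_const)).sub
          (hMc.comp (continuous_id.mul continuous_const))).continuousWithinAt
    exact key.congr (fun a ha => hθ' a ha) (hθ' a₀ ha₀')
  have hθ0 : θ 0 = 0 := by
    rw [hθ' 0 le_rfl]
    simp
  have hzero : Tendsto θ (nhdsWithin 0 (Ici 0)) (nhds 0) := by
    have := hcont 0 (by simp)
    rwa [ContinuousWithinAt, hθ0] at this
  -- asymptotics
  set Δ : ℝ := (μ {ω | 0 < Y1 ω}).toReal - (μ {ω | 0 < Y0 ω}).toReal with hΔdef
  have hset : ∀ (Y : Ω → ℝ), (∀ ω, 0 ≤ Y ω) → {ω | 0 < Y ω} = {ω | Y ω = 0}ᶜ := by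
    intro Y hY
    ext ω
    simp only [mem_setOf_eq, mem_compl_iff]
    constructor
    · intro h h'; rw [h'] at h; exact lt_irrefl 0 h
    · intro h; exact lt_of_le_of_ne (hY ω) (Ne.symm h)
  have hmeas1 : MeasurableSet {ω | Y1 ω = 0} := hY1meas (measurableSet_singleton 0)
  have hmeas0 : MeasurableSet {ω | Y0 ω = 0} := hY0meas (measurableSet_singleton 0)
  have htoReal : ∀ (Y : Ω → ℝ), (∀ ω, 0 ≤ Y ω) → MeasurableSet {ω | Y ω = 0} →
      (μ {ω | 0 < Y ω}).toReal = 1 - (μ {ω | Y ω = 0}).toReal := by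
    intro Y hY hms
    rw [hset Y hY, prob_compl_eq_one_sub hms,
      ENNReal.toReal_sub_of_le prob_le_one ENNReal.one_ne_top, ENNReal.toReal_one]
  have hΔne : Δ ≠ 0 := by
    intro h
    rw [hΔdef, htoReal Y1 hY1nonneg hmeas1, htoReal Y0 hY0nonneg hmeas0] at h
    have : (μ {ω | Y1 ω = 0}).toReal = (μ {ω | Y0 ω = 0}).toReal := by linarith
    exact hext ((ENNReal.toReal_eq_toReal_iff' (measure_ne_top μ _) (measure_ne_top μ _)).mp this)
  have hth : Tendsto (fun a => θ a / Real.log a) atTop (nhds Δ) := by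
    have h1 := tendsto_integral_div_log (μ := μ) hMc hC0 hC hMlim hY1meas hY1nonneg hint1
    have h0 := tendsto_integral_div_log (μ := μ) hMc hC0 hC hMlim hY0meas hY0nonneg hint0
    refine (h1.sub h0).congr' ?_
    filter_upwards [eventually_ge_atTop (0:ℝ)] with a ha
    rw [hθ' a ha, integral_sub (hI1 a ha) (hI0 a ha), sub_div]
  have hatTop : Tendsto (fun a => |θ a|) atTop atTop := by
    have habs : Tendsto (fun a => |θ a / Real.log a|) atTop (nhds |Δ|) := hth.abs
    have hhalf : ∀ᶠ a in atTop, |Δ| / 2 ≤ |θ a / Real.log a| :=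
      habs.eventually (eventually_ge_nhds (half_lt_self (abs_pos.mpr hΔne)))
    have hlogT : Tendsto (fun a : ℝ => |Δ| / 2 * Real.log a) atTop atTop :=
      Real.tendsto_log_atTop.const_mul_atTop (by positivity)
    refine tendsto_atTop_mono' atTop ?_ hlogT
    filter_upwards [hhalf, eventually_gt_atTop (1:ℝ)] with a h1 h2
    have hlp : 0 < Real.log a := Real.log_pos h2
    rw [abs_div, abs_of_pos hlp, le_div_iff₀ hlp] at h1
    exact h1
  refine ⟨hcont, hzero, hatTop, fun θstar hpos => ?_⟩
  -- get a large point
  obtain ⟨b, hb1, hb2⟩ := ((hatTop.eventually_ge_atTop θstar).and (eventually_ge_atTop 1)).exists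
  -- get a small point
  have hsmall : ∀ᶠ x in nhdsWithin 0 (Ioi (0:ℝ)),
      |θ x| < θstar ∧ x < 1 ∧ x ∈ Ioi (0:ℝ) := by
    have e1 : ∀ᶠ x in nhdsWithin 0 (Ioi (0:ℝ)), |θ x| < θstar := by
      have := (hzero.abs.eventually (eventually_lt_nhds (by simpa using hpos)))
      exact (nhdsWithin_mono 0 Ioi_subset_Ici_self) this
    have e2 : ∀ᶠ x in nhdsWithin 0 (Ioi (0:ℝ)), x < 1 :=
      (eventually_lt_nhds one_pos).filter_mono nhdsWithin_le_nhds
    exact e1.and (e2.and eventually_mem_nhdsWithin)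
  obtain ⟨ε, hεθ, hε1, hε0⟩ := hsmall.exists
  have hεb : ε ≤ b := le_trans hε1.le hb2
  have hsub : Icc ε b ⊆ Ici 0 := fun x hx => le_trans (le_of_lt hε0) hx.1
  have hconta : ContinuousOn (fun x => |θ x|) (Icc ε b) := (hcont.mono hsub).abs
  have hmem : θstar ∈ Icc (|θ ε|) (|θ b|) := ⟨hεθ.le, hb1⟩
  obtain ⟨x, hx, hxe⟩ := intermediate_value_Icc hεb hconta hmem
  exact ⟨x, lt_of_lt_of_le hε0 hx.1, hxe⟩
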